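/- arXiv:2505.02051 — 3 statements merged into one kernel-verified Lean document; each statement's English description precedes it below -/
import Mathlib

section
/- The transitive closure of the relation ≺ on the set S([n],d) of (d+1)-element subsets of [n] is irreflexive, hence defines a strict partial order. In particular there are no cycles I₀ ≺ I₁ ≺ ... ≺ I_r = I₀ of such subsets. -/
/-- The relation `I ≺ J` on the set `S([n],d)` of `(d+1)`-element subsets of `[n] = {0,...,n}`:
both `I` and `J` are `(d+1)`-element subsets of `[n]` with `|I ∪ J| = d+2`, the unique element
of `J \ I` is an even gap of `I` (i.e. `|{a ∈ I : a > j}|` is even), and the unique element of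
`I \ J` is an odd gap of `J` (i.e. `|{a ∈ J : a > i}|` is odd). -/
def Prec (n d : ℕ) (I J : Finset ℕ) : Prop :=
  I ⊆ Finset.range (n + 1) ∧ J ⊆ Finset.range (n + 1) ∧
    I.card = d + 1 ∧ J.card = d + 1 ∧ (I ∪ J).card = d + 2 ∧
    (∀ j ∈ J \ I, Even ((I.filter (fun a => j < a)).card)) ∧
    (∀ i ∈ I \ J, Odd ((J.filter (fun a => i < a)).card))

/-- Count of elements of `S` above `p`. -/
def ct (S : Finset ℕ) (p : ℕ) : ℕ := (S.filter (fun a => p < a)).card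

/-- Parity bit of the count of elements above `p`. -/
def gpar (S : Finset ℕ) (p : ℕ) : ℕ := ct S p % 2

/-- The binary-number potential function. -/
def wt (n : ℕ) (S : Finset ℕ) : ℕ := ∑ p ∈ Finset.range (n + 1), gpar S p * 2 ^ p

lemma sum_pow_lt (K : ℕ) : (∑ p ∈ Finset.range K, 2 ^ p) < 2 ^ K := by
  induction K with
  | zero => simp
  | succ k ih => rw [Finset.sum_range_succ, pow_succ]; omega

lemma keylt (n M : ℕ) (I J : Finset ℕ) (hMn : M ≤ n) (hM1 : 1 ≤ M)
    (hagree : ∀ p, M ≤ p → gpar I p = gpar J p)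
    (hI : gpar I (M - 1) = 0) (hJ : gpar J (M - 1) = 1) : wt n I < wt n J := by
  obtain ⟨K, rfl⟩ : ∃ K, M = K + 1 := ⟨M - 1, by omega⟩
  simp only [Nat.add_sub_cancel] at hI hJ
  have hsplit : ∀ (f : ℕ → ℕ), ∑ p ∈ Finset.range (n + 1), f p =
      (∑ p ∈ Finset.range K, f p) + f K + ∑ p ∈ Finset.Ico (K + 1) (n + 1), f p := by
    intro f
    rw [← Finset.sum_range_add_sum_Ico f (show K + 1 ≤ n + 1 by omega), Finset.sum_range_succ]
  unfold wt
  rw [hsplit, hsplit]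
  have hT : ∑ p ∈ Finset.Ico (K + 1) (n + 1), gpar I p * 2 ^ p
      = ∑ p ∈ Finset.Ico (K + 1) (n + 1), gpar J p * 2 ^ p :=
    Finset.sum_congr rfl fun p hp => by
      rw [hagree p (by have := (Finset.mem_Ico.mp hp).1; omega)]
  rw [hT, hI, hJ]
  have hA : (∑ p ∈ Finset.range K, gpar I p * 2 ^ p) < 2 ^ K := by
    calc (∑ p ∈ Finset.range K, gpar I p * 2 ^ p) ≤ ∑ p ∈ Finset.range K, 2 ^ p := by
          apply Finset.sum_le_sum
          intro p _
          have : gpar I p ≤ 1 := by unfold gpar; omega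
          calc gpar I p * 2 ^ p ≤ 1 * 2 ^ p := Nat.mul_le_mul_right _ this
            _ = 2 ^ p := one_mul _
      _ < 2 ^ K := sum_pow_lt K
  have hB : (0:ℕ) ≤ ∑ p ∈ Finset.range K, gpar J p * 2 ^ p := Nat.zero_le _
  simp only [zero_mul, one_mul]
  omega

lemma key {n d : ℕ} {I J : Finset ℕ} (h : Prec n d I J) : wt n I < wt n J := by
  obtain ⟨hIr, hJr, hIc, hJc, hUc, hEven, hOdd⟩ := h
  have hIJcard : (I \ J).card = 1 := by
    have := Finset.card_sdiff_add_card I J; omega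
  have hJIcard : (J \ I).card = 1 := by
    have := Finset.card_sdiff_add_card J I
    rw [Finset.union_comm] at this; omega
  obtain ⟨i, hi⟩ := Finset.card_eq_one.mp hIJcard
  obtain ⟨j, hj⟩ := Finset.card_eq_one.mp hJIcard
  have hiI : i ∈ I := (Finset.mem_sdiff.mp (hi ▸ Finset.mem_singleton_self i)).1
  have hiJ : i ∉ J := (Finset.mem_sdiff.mp (hi ▸ Finset.mem_singleton_self i)).2
  have hjJ : j ∈ J := (Finset.mem_sdiff.mp (hj ▸ Finset.mem_singleton_self j)).1
  have hjI : j ∉ I := (Finset.mem_sdiff.mp (hj ▸ Finset.mem_singleton_self j)).2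
  have hij : i ≠ j := fun h => hjI (h ▸ hiI)
  have hUj : I ∪ J = insert j I := by
    rw [← Finset.union_sdiff_self_eq_union, hj]
    ext a; simp [Finset.mem_union, or_comm]
  have hUi : I ∪ J = insert i J := by
    rw [Finset.union_comm, ← Finset.union_sdiff_self_eq_union, hi]
    ext a; simp [Finset.mem_union, or_comm]
  have cui : ∀ p, ct (I ∪ J) p = ct I p + (if p < j then 1 else 0) := by
    intro p
    unfold ct
    rw [hUj, Finset.filter_insert]
    split
    · rw [Finset.card_insert_of_notMem fun hm => hjI (Finset.mem_filter.mp hm).1]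
    · omega
  have cuj : ∀ p, ct (I ∪ J) p = ct J p + (if p < i then 1 else 0) := by
    intro p
    unfold ct
    rw [hUi, Finset.filter_insert]
    split
    · rw [Finset.card_insert_of_notMem fun hm => hiJ (Finset.mem_filter.mp hm).1]
    · omega
  have hin : i ≤ n := by have := Finset.mem_range.mp (hIr hiI); omega
  have hjn : j ≤ n := by have := Finset.mem_range.mp (hJr hjJ); omega
  have hEvenj : Even (ct I j) := hEven j (hj ▸ Finset.mem_singleton_self j)
  have hOddi : Odd (ct J i) := hOdd i (hi ▸ Finset.mem_singleton_self i)
  rw [Nat.even_iff] at hEvenj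
  rw [Nat.odd_iff] at hOddi
  rcases lt_or_gt_of_ne hij with hlt | hgt
  · -- i < j, take M = j
    apply keylt n j I J hjn (by omega)
    · intro p hp
      have h1 := cui p
      have h2 := cuj p
      rw [if_neg (by omega)] at h1
      rw [if_neg (by omega)] at h2
      unfold gpar; omega
    · -- gpar I (j-1) = 0
      have hfe : I.filter (fun a => j - 1 < a) = I.filter (fun a => j < a) := by
        apply Finset.filter_congr
        intro a ha
        have : a ≠ j := fun h => hjI (h ▸ ha)
        omega
      unfold gpar ct
      rw [hfe]
      exact hEvenj
    · -- gpar J (j-1) = 1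
      have h1 := cui (j - 1)
      have h2 := cuj (j - 1)
      rw [if_pos (by omega)] at h1
      rw [if_neg (by omega)] at h2
      have hfe : I.filter (fun a => j - 1 < a) = I.filter (fun a => j < a) := by
        apply Finset.filter_congr
        intro a ha
        have : a ≠ j := fun h => hjI (h ▸ ha)
        omega
      have : ct I (j - 1) = ct I j := by unfold ct; rw [hfe]
      unfold gpar; omega
  · -- j < i, take M = i
    have hIi : ct I i % 2 = 1 := by
      have h1 := cui i
      have h2 := cuj i
      rw [if_neg (by omega)] at h1
      rw [if_neg (by omega)] at h2
      omega
    have hfe : I.filter (fun a => i - 1 < a) = insert i (I.filter (fun a => i < a)) := by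
      ext a
      simp only [Finset.mem_filter, Finset.mem_insert]
      constructor
      · rintro ⟨ha, hlt'⟩
        rcases eq_or_ne a i with h | h
        · exact Or.inl h
        · exact Or.inr ⟨ha, by omega⟩
      · rintro (rfl | ⟨ha, hlt'⟩)
        · exact ⟨hiI, by omega⟩
        · exact ⟨ha, by omega⟩
    have hctI : ct I (i - 1) = ct I i + 1 := by
      unfold ct
      rw [hfe, Finset.card_insert_of_notMem (by simp)]
    apply keylt n i I J hin (by omega)
    · intro p hp
      have h1 := cui p
      have h2 := cuj p
      rw [if_neg (by omega)] at h1
      rw [if_neg (by omega)] at h2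
      unfold gpar; omega
    · unfold gpar; omega
    · have h1 := cui (i - 1)
      have h2 := cuj (i - 1)
      rw [if_neg (by omega)] at h1
      rw [if_pos (by omega)] at h2
      unfold gpar; omega

/-- Rambau's lemma. The transitive closure of `≺` on `S([n],d)` is
irreflexive, hence a strict partial order; in particular there are no cycles
`I₀ ≺ I₁ ≺ ... ≺ I_r = I₀`. -/
theorem stmt_3 (n d : ℕ) : ∀ I : Finset ℕ, ¬ Relation.TransGen (Prec n d) I I := by
  have mono : ∀ {I J : Finset ℕ}, Relation.TransGen (Prec n d) I J → wt n I < wt n J := by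
    intro I J h
    induction h with
    | single h => exact key h
    | tail _ h ih => exact ih.trans (key h)
  intro I h
  exact lt_irrefl _ (mono h)
end

section
/- Let X be a simplicial abelian group whose normalized chain complex C(X) satisfies C(X)_n = 0 for n > m. Then for every n > m, the map X_n → X_{Λ₀ⁿ} restricting to the outer horn Λ₀ⁿ is an isomorphism of abelian groups. -/
open CategoryTheory Simplicial

private lemma aux_dd (X : SimplicialObject AddCommGrpCat) {k : ℕ} (a b : ℕ) (hab : a ≤ b)
    (hb : b ≤ k + 1) (x : X _⦋k + 2⦌) :
    X.δ (n := k) ⟨a, by omega⟩ (X.δ (n := k + 1) ⟨b + 1, by omega⟩ x) =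
      X.δ (n := k) ⟨b, by omega⟩ (X.δ (n := k + 1) ⟨a, by omega⟩ x) := by
  have h := X.δ_comp_δ (n := k) (i := ⟨a, by omega⟩) (j := ⟨b, by omega⟩) (by exact hab)
  have h' : ∀ z, (X.δ (⟨b, by omega⟩ : Fin (k + 2)).succ ≫ X.δ ⟨a, by omega⟩) z
      = (X.δ (Fin.castSucc ⟨a, by omega⟩) ≫ X.δ ⟨b, by omega⟩) z := fun z => by rw [h]
  have h2 := h' x
  rw [comp_apply, comp_apply] at h2
  simpa [Fin.succ, Fin.castSucc, Fin.castAdd, Fin.castLE] using h2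

private lemma aux_ds_succ (X : SimplicialObject AddCommGrpCat) {k : ℕ} (j : ℕ) (hj : j ≤ k + 1)
    (y : X _⦋k + 1⦌) :
    X.δ (n := k + 1) ⟨j + 1, by omega⟩ (X.σ ⟨j, by omega⟩ y) = y := by
  have h := X.δ_comp_σ_succ (n := k + 1) (i := ⟨j, by omega⟩)
  have h' : (X.σ ⟨j, by omega⟩ ≫ X.δ (⟨j, by omega⟩ : Fin (k + 2)).succ) y
      = (𝟙 (X _⦋k + 1⦌)) y := by rw [h]
  rw [comp_apply, id_apply] at h'
  simpa [Fin.succ] using h'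

private lemma aux_ds_gt (X : SimplicialObject AddCommGrpCat) {k : ℕ} (j c : ℕ) (hjc : j < c)
    (hc : c ≤ k + 1) (y : X _⦋k + 1⦌) :
    X.δ (n := k + 1) ⟨c + 1, by omega⟩ (X.σ ⟨j, by omega⟩ y) =
      X.σ (⟨j, by omega⟩ : Fin (k + 1)) (X.δ (n := k) ⟨c, by omega⟩ y) := by
  have h := X.δ_comp_σ_of_gt (n := k) (i := ⟨c, by omega⟩) (j := ⟨j, by omega⟩)
    (by simp [Fin.castSucc, Fin.castAdd, Fin.castLE, Fin.lt_def]; omega)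
  have h' : (X.σ (Fin.castSucc ⟨j, by omega⟩) ≫ X.δ (⟨c, by omega⟩ : Fin (k + 2)).succ) y
      = (X.δ ⟨c, by omega⟩ ≫ X.σ ⟨j, by omega⟩) y := by rw [h]
  rw [comp_apply, comp_apply] at h'
  simpa [Fin.succ, Fin.castSucc, Fin.castAdd, Fin.castLE] using h'

private lemma aux_δ_congr (X : SimplicialObject AddCommGrpCat) {n : ℕ} (a b : ℕ)
    (ha : a < n + 2) (hb : b < n + 2) (h : a = b) (z : X _⦋n + 1⦌) :
    X.δ ⟨a, ha⟩ z = X.δ ⟨b, hb⟩ z := by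
  subst h; rfl

set_option maxHeartbeats 1000000 in
/-- Let `X` be a simplicial abelian group whose normalized chain complex
(`C(X)_n = ⋂_{i=1}^{n} ker dᵢ`) vanishes in degrees `n > m`.  Then for every `n > m`, the
restriction map `X_n → X_{Λ₀ⁿ}`, `x ↦ (d₁x, ..., d_nx)`, is an isomorphism of abelian
groups onto the group of compatible tuples `(x₁,...,x_n)` with `dᵢ x_j = d_{j-1} x_i`
for `1 ≤ i < j ≤ n` (injective with image exactly the compatible tuples). -/
theorem stmt_8 (X : SimplicialObject AddCommGrpCat) (m : ℕ)
    (h1 : ∀ k : ℕ, m < k + 2 → ∀ x : X _⦋k + 2⦌,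
        (∀ i : Fin (k + 2), X.δ i.succ x = 0) → x = 0)
    (h2 : m = 0 → ∀ x : X _⦋1⦌, X.δ (1 : Fin 2) x = 0 → x = 0) :
    (∀ k : ℕ, m < k + 2 →
      Function.Injective
          (fun x : X _⦋k + 2⦌ => fun i : Fin (k + 2) => X.δ i.succ x) ∧
        Set.range (fun x : X _⦋k + 2⦌ => fun i : Fin (k + 2) => X.δ i.succ x) =
          setOf (fun t : Fin (k + 2) → X _⦋k + 1⦌ =>
            ∀ (a b : ℕ), ∀ (ha : 1 ≤ a) (hab : a < b) (hb : b ≤ k + 2),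
              X.δ (n := k) ⟨a, by omega⟩ (t ⟨b - 1, by omega⟩) =
                X.δ (n := k) ⟨b - 1, by omega⟩ (t ⟨a - 1, by omega⟩))) ∧
    (m = 0 →
      Function.Injective (fun x : X _⦋1⦌ => fun _ : Fin 1 => X.δ (1 : Fin 2) x) ∧
        Set.range (fun x : X _⦋1⦌ => fun _ : Fin 1 => X.δ (1 : Fin 2) x) = Set.univ) := by
  constructor
  · intro k hk
    constructor
    · -- injectivity
      intro x y hxy
      have hz : ∀ i : Fin (k + 2), X.δ i.succ (x - y) = 0 := by
        intro i
        rw [map_sub, show (X.δ i.succ) x = (X.δ i.succ) y from congrFun hxy i, sub_self]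
      exact sub_eq_zero.mp (h1 k hk (x - y) hz)
    · ext t
      constructor
      · -- range ⊆ compatible
        rintro ⟨x, hx⟩ a b ha hab hb
        have hb1 : X.δ (Fin.succ (⟨b - 1, by omega⟩ : Fin (k + 2))) x = t ⟨b - 1, by omega⟩ :=
          congrFun hx ⟨b - 1, by omega⟩
        have ha1 : X.δ (Fin.succ (⟨a - 1, by omega⟩ : Fin (k + 2))) x = t ⟨a - 1, by omega⟩ :=
          congrFun hx ⟨a - 1, by omega⟩
        rw [← hb1, ← ha1]
        have h := aux_dd X a (b - 1) (by omega) (by omega) x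
        rw [aux_δ_congr X (n := k + 1) ((b - 1) + 1) b (by omega) (by omega) (by omega)] at h
        have e1 : (Fin.succ (⟨b - 1, by omega⟩ : Fin (k + 2))) = (⟨b, by omega⟩ : Fin (k + 3)) := by
          simp only [Fin.succ, Fin.mk.injEq]; omega
        have e2 : (Fin.succ (⟨a - 1, by omega⟩ : Fin (k + 2))) = (⟨a, by omega⟩ : Fin (k + 3)) := by
          simp only [Fin.succ, Fin.mk.injEq]; omega
        rw [e1, e2]
        exact h
      · -- compatible ⊆ range
        intro ht
        simp only [Set.mem_setOf_eq] at ht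
        let seq : ℕ → (X _⦋k + 2⦌ : Type _) := fun r => Nat.rec
          (motive := fun _ => (X _⦋k + 2⦌ : Type _))
          (X.σ ⟨k + 1, by omega⟩ (t ⟨k + 1, by omega⟩))
          (fun r y => y - X.σ ⟨k - r, by omega⟩
            (X.δ (n := k + 1) ⟨k + 1 - r, by omega⟩ y - t ⟨k - r, by omega⟩)) r
        have hseqS : ∀ r : ℕ, seq (r + 1) = seq r - X.σ ⟨k - r, by omega⟩
            (X.δ (n := k + 1) ⟨k + 1 - r, by omega⟩ (seq r) - t ⟨k - r, by omega⟩) :=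
          fun r => rfl
        have key : ∀ (r : ℕ) (hr : r ≤ k + 1) (i : ℕ) (h1i : k + 2 - r ≤ i) (h2i : i ≤ k + 2),
            X.δ (n := k + 1) ⟨i, by omega⟩ (seq r) = t ⟨i - 1, by omega⟩ := by
          intro r
          induction r with
          | zero =>
            intro hr i h1i h2i
            have hi : i = k + 2 := by omega
            subst hi
            show X.δ (n := k + 1) ⟨k + 2, by omega⟩
              (X.σ ⟨k + 1, by omega⟩ (t ⟨k + 1, by omega⟩)) = t ⟨k + 2 - 1, by omega⟩
            have h := aux_ds_succ X (k + 1) (by omega) (t ⟨k + 1, by omega⟩)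
            rw [h]
            congr 1
          | succ r ih =>
            intro hr i h1i h2i
            have hr' : r ≤ k := by omega
            rw [hseqS r, map_sub]
            by_cases hij : i = k + 1 - r
            · subst hij
              have e : X.δ (n := k + 1) ⟨k + 1 - r, by omega⟩
                  (X.σ ⟨k - r, by omega⟩
                    (X.δ (n := k + 1) ⟨k + 1 - r, by omega⟩ (seq r) - t ⟨k - r, by omega⟩)) =
                  X.δ (n := k + 1) ⟨k + 1 - r, by omega⟩ (seq r) - t ⟨k - r, by omega⟩ := by
                rw [aux_δ_congr X (n := k + 1) (k + 1 - r) ((k - r) + 1) (by omega) (by omega) (by omega)]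
                exact aux_ds_succ X (k - r) (by omega) _
              rw [e]
              have e2 : (⟨k + 1 - r - 1, by omega⟩ : Fin (k + 2)) = ⟨k - r, by omega⟩ := by
                simp only [Fin.mk.injEq]; omega
              rw [e2, sub_sub_cancel]
            · have hi1 : k + 2 - r ≤ i := by omega
              have IH := ih (by omega) i hi1 h2i
              have hz : X.δ (n := k + 1) ⟨i, by omega⟩
                  (X.σ ⟨k - r, by omega⟩
                    (X.δ (n := k + 1) ⟨k + 1 - r, by omega⟩ (seq r) - t ⟨k - r, by omega⟩)) = 0 := by
                rw [aux_δ_congr X (n := k + 1) i ((i - 1) + 1) (by omega) (by omega) (by omega)]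
                rw [aux_ds_gt X (k - r) (i - 1) (by omega) (by omega)]
                have inner : X.δ (n := k) ⟨i - 1, by omega⟩
                    (X.δ (n := k + 1) ⟨k + 1 - r, by omega⟩ (seq r) - t ⟨k - r, by omega⟩) = 0 := by
                  rw [map_sub]
                  have hA := aux_dd X (k + 1 - r) (i - 1) (by omega) (by omega) (seq r)
                  rw [aux_δ_congr X (n := k + 1) (i - 1 + 1) i (by omega) (by omega) (by omega), IH] at hA
                  rw [← hA]
                  have hc := ht (k + 1 - r) i (by omega) (by omega) h2i
                  have e4 : (⟨k + 1 - r - 1, by omega⟩ : Fin (k + 2)) = ⟨k - r, by omega⟩ := by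
                    simp only [Fin.mk.injEq]; omega
                  rw [e4] at hc
                  rw [hc]
                  exact sub_self _
                rw [inner, map_zero]
              rw [IH, hz, sub_zero]
        refine ⟨seq (k + 1), funext fun i => ?_⟩
        exact key (k + 1) le_rfl (i.val + 1) (by omega) (by omega)
  · intro hm
    constructor
    · intro x y hxy
      have hd : X.δ (1 : Fin 2) x = X.δ (1 : Fin 2) y := congrFun hxy 0
      have := h2 hm (x - y) (by rw [map_sub, hd, sub_self])
      exact sub_eq_zero.mp this
    · ext t
      simp only [Set.mem_univ, iff_true]
      refine ⟨X.σ (0 : Fin 1) (t 0), funext fun i => ?_⟩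
      have h := X.δ_comp_σ_succ (n := 0) (i := (0 : Fin 1))
      have h' : (X.σ (0 : Fin 1) ≫ X.δ (Fin.succ (0 : Fin 1))) (t 0) = (𝟙 (X _⦋0⦌)) (t 0) := by
        rw [h]
      rw [comp_apply, id_apply] at h'
      have hi : i = 0 := Subsingleton.elim _ _
      rw [hi]
      have e : (1 : Fin 2) = Fin.succ (0 : Fin 1) := rfl
      rw [e]
      exact h'
end

section
/- Let X : Δᵒᵖ → C be a simplicial object in a category C with finite limits, satisfying the (lower 1-) Segal condition: for all n ≥ 2, the map X_n → X_{\{0,1\}} ×_{X_{\{1\}}} X_{\{1,2\}} ×_{X_{\{2\}}} ⋯ ×_{X_{\{n-1\}}} X_{\{n-1,n\}} is an isomorphism. Then for every 0 ≤ k ≤ n, the square with vertices X_{[n]}, X_{\{0,...,k\}}, X_{\{k,...,n\}}, X_{\{k\}} (maps induced by the inclusions of the subsets into [n] and of {k} into both intervals) is a pullback square in C. -/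
open CategoryTheory Simplicial

/-- The edge `X_n → X_1` of a simplicial object corresponding to `{i, i+1} ⊆ [n]`. -/
def edgeMap {C : Type*} [Category C] (X : SimplicialObject C) {n : ℕ} (i : Fin n) :
    X _⦋n⦌ ⟶ X _⦋1⦌ :=
  X.map (SimplexCategory.mkOfLe i.castSucc i.succ (Fin.castSucc_lt_succ (i := i)).le).op

/-- The vertex `X_1 → X_0` corresponding to `{i} ⊆ [1]`. -/
def vertexMap {C : Type*} [Category C] (X : SimplicialObject C) (i : Fin 2) :
    X _⦋1⦌ ⟶ X _⦋0⦌ :=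
  X.map (SimplexCategory.const (SimplexCategory.mk 0) (SimplexCategory.mk 1) i).op

namespace SegalAux

open SimplexCategory

variable {C : Type*} [Category C] (X : SimplicialObject C)

lemma map_map {a b c : SimplexCategory} (f : a ⟶ b) (g : b ⟶ c) :
    X.map g.op ≫ X.map f.op = X.map (f ≫ g).op := by
  rw [← X.map_comp, ← op_comp]

lemma edge_vertex_one {m : ℕ} (i : Fin m) :
    edgeMap X i ≫ vertexMap X 1 = X.map (const ⦋0⦌ ⦋m⦌ i.succ).op := by
  rw [edgeMap, vertexMap, map_map, const_comp]
  rfl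

lemma edge_vertex_zero {m : ℕ} (i : Fin m) :
    edgeMap X i ≫ vertexMap X 0 = X.map (const ⦋0⦌ ⦋m⦌ i.castSucc).op := by
  rw [edgeMap, vertexMap, map_map, const_comp]
  rfl

lemma edge_compat' {m : ℕ} (i : ℕ) (h1 : i < m) (h2 : i + 1 < m) :
    edgeMap X ⟨i, h1⟩ ≫ vertexMap X 1 = edgeMap X ⟨i + 1, h2⟩ ≫ vertexMap X 0 := by
  rw [edge_vertex_one, edge_vertex_zero]
  congr 3


variable {X}

lemma segal'
    (hSegal : ∀ (j : ℕ) (T : C) (g : Fin (j + 2) → (T ⟶ X _⦋1⦌)),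
      (∀ i : Fin (j + 1), g i.castSucc ≫ vertexMap X 1 = g i.succ ≫ vertexMap X 0) →
      ∃! f : T ⟶ X _⦋j + 2⦌, ∀ i : Fin (j + 2), f ≫ edgeMap X i = g i)
    (m : ℕ) (hm : 2 ≤ m) (T : C) (g : Fin m → (T ⟶ X _⦋1⦌))
    (hg : ∀ (i : ℕ) (h1 : i < m) (h2 : i + 1 < m),
      g ⟨i, h1⟩ ≫ vertexMap X 1 = g ⟨i + 1, h2⟩ ≫ vertexMap X 0) :
    ∃! f : T ⟶ X _⦋m⦌, ∀ i : Fin m, f ≫ edgeMap X i = g i := by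
  obtain ⟨j, rfl⟩ : ∃ j, m = j + 2 := ⟨m - 2, by omega⟩
  refine hSegal j T g fun i => ?_
  have := hg i.1 (by omega) (by omega)
  convert this using 3
  all_goals rfl

lemma edge_one : edgeMap X (0 : Fin 1) = 𝟙 _ := by
  have : (SimplexCategory.mkOfLe (0 : Fin 1).castSucc (0 : Fin 1).succ
      (Fin.castSucc_lt_succ (i := 0)).le) = 𝟙 (⦋1⦌ : SimplexCategory) := by
    apply SimplexCategory.Hom.ext_one_left <;> rfl
  rw [edgeMap, this]
  simp

lemma ext_edges
    (hSegal : ∀ (j : ℕ) (T : C) (g : Fin (j + 2) → (T ⟶ X _⦋1⦌)),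
      (∀ i : Fin (j + 1), g i.castSucc ≫ vertexMap X 1 = g i.succ ≫ vertexMap X 0) →
      ∃! f : T ⟶ X _⦋j + 2⦌, ∀ i : Fin (j + 2), f ≫ edgeMap X i = g i)
    (m : ℕ) (hm : 1 ≤ m) {T : C} (f f' : T ⟶ X _⦋m⦌)
    (h : ∀ i : Fin m, f ≫ edgeMap X i = f' ≫ edgeMap X i) : f = f' := by
  obtain ⟨m, rfl⟩ : ∃ m', m = m' + 1 := ⟨m - 1, by omega⟩
  match m with
  | 0 =>
    have h0 := h 0
    rwa [edge_one, Category.comp_id, Category.comp_id] at h0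
  | Nat.succ m' =>
    obtain ⟨u, _, hu⟩ := segal' hSegal (m' + 2) (by omega) T (fun i => f' ≫ edgeMap X i)
      (fun i h1 h2 => by
        rw [Category.assoc, Category.assoc, edge_compat' X i h1 h2])
    rw [hu f h, hu f' (fun i => rfl)]


variable (X)

def phi1 (k l : ℕ) : (⦋k⦌ : SimplexCategory) ⟶ ⦋k + l⦌ :=
  SimplexCategory.mkHom ⟨Fin.castLE (Nat.add_le_add_right (Nat.le_add_right k l) 1), fun _ _ h => h⟩

def phi2 (k l : ℕ) : (⦋l⦌ : SimplexCategory) ⟶ ⦋k + l⦌ :=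
  SimplexCategory.mkHom
    ⟨fun i : Fin (l + 1) => (⟨k + (i : ℕ), Nat.add_lt_add_left i.isLt k⟩ : Fin (k + l + 1)),
      fun a b hab => Nat.add_le_add_left hab k⟩

lemma phi1_edge (k l : ℕ) (i : Fin k) :
    X.map (phi1 k l).op ≫ edgeMap X i
      = edgeMap X (⟨i.1, by have := i.isLt; omega⟩ : Fin (k + l)) := by
  rw [edgeMap, edgeMap, map_map]
  suffices h : (SimplexCategory.mkOfLe i.castSucc i.succ (Fin.castSucc_lt_succ (i := i)).le ≫ phi1 k l)
      = SimplexCategory.mkOfLe (⟨i.1, by have := i.isLt; omega⟩ : Fin (k + l)).castSucc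
        (⟨i.1, by have := i.isLt; omega⟩ : Fin (k + l)).succ
        (Fin.castSucc_lt_succ (i := _)).le by rw [h]
  apply SimplexCategory.Hom.ext_one_left <;> rfl

lemma phi2_edge (k l : ℕ) (i : Fin l) :
    X.map (phi2 k l).op ≫ edgeMap X i
      = edgeMap X (⟨k + i.1, by have := i.isLt; omega⟩ : Fin (k + l)) := by
  rw [edgeMap, edgeMap, map_map]
  suffices h : (SimplexCategory.mkOfLe i.castSucc i.succ (Fin.castSucc_lt_succ (i := i)).le ≫ phi2 k l)
      = SimplexCategory.mkOfLe (⟨k + i.1, by have := i.isLt; omega⟩ : Fin (k + l)).castSucc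
        (⟨k + i.1, by have := i.isLt; omega⟩ : Fin (k + l)).succ
        (Fin.castSucc_lt_succ (i := _)).le by rw [h]
  apply SimplexCategory.Hom.ext_one_left <;> rfl

lemma sq_comm (k l : ℕ) :
    X.map (phi1 k l).op ≫ X.map (const ⦋0⦌ ⦋k⦌ (Fin.last k)).op
      = X.map (phi2 k l).op ≫ X.map (const ⦋0⦌ ⦋l⦌ 0).op := by
  rw [map_map, map_map, const_comp, const_comp]
  suffices h : (phi1 k l).toOrderHom (Fin.last k) = (phi2 k l).toOrderHom 0 by rw [h]
  ext
  simp [phi1, phi2]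
  show (Fin.last k : ℕ) = k + ((0 : Fin (l+1)) : ℕ)
  simp


variable {X}

lemma key
    (hSegal : ∀ (j : ℕ) (T : C) (g : Fin (j + 2) → (T ⟶ X _⦋1⦌)),
      (∀ i : Fin (j + 1), g i.castSucc ≫ vertexMap X 1 = g i.succ ≫ vertexMap X 0) →
      ∃! f : T ⟶ X _⦋j + 2⦌, ∀ i : Fin (j + 2), f ≫ edgeMap X i = g i)
    (k l : ℕ) (T : C) (a : T ⟶ X _⦋k + 1⦌) (b : T ⟶ X _⦋l + 1⦌)
    (hab : a ≫ X.map (const ⦋0⦌ ⦋k + 1⦌ (Fin.last (k + 1))).op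
      = b ≫ X.map (const ⦋0⦌ ⦋l + 1⦌ 0).op) :
    ∃! f : T ⟶ X _⦋(k + 1) + (l + 1)⦌,
      f ≫ X.map (phi1 (k + 1) (l + 1)).op = a ∧ f ≫ X.map (phi2 (k + 1) (l + 1)).op = b := by
  obtain ⟨f, hf, hfu⟩ := segal' hSegal ((k + 1) + (l + 1)) (by omega) T
    (fun i => if h : (i : ℕ) < k + 1 then a ≫ edgeMap X ⟨i, h⟩
      else b ≫ edgeMap X ⟨(i : ℕ) - (k + 1), by have := i.isLt; omega⟩)
    (fun i h1 h2 => by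
      dsimp only
      rcases Nat.lt_trichotomy (i + 1) (k + 1) with hik | hik | hik
      · rw [dif_pos (show i < k + 1 by omega), dif_pos (show i + 1 < k + 1 from hik),
          Category.assoc, Category.assoc, edge_compat']
      · rw [dif_pos (show i < k + 1 by omega), dif_neg (show ¬ (i + 1 < k + 1) by omega),
          Category.assoc, Category.assoc, edge_vertex_one, edge_vertex_zero]
        have e1 : ((⟨i, by omega⟩ : Fin (k + 1)).succ) = Fin.last (k + 1) := by
          ext; simp; omega
        have e2 : ((⟨i + 1 - (k + 1), by omega⟩ : Fin (l + 1)).castSucc)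
            = (0 : Fin (l + 1 + 1)) := by
          ext; simp; omega
        rw [e1, e2]
        exact hab
      · rw [dif_neg (show ¬ (i < k + 1) by omega), dif_neg (show ¬ (i + 1 < k + 1) by omega),
          Category.assoc, Category.assoc]
        have e : (⟨i + 1 - (k + 1), by omega⟩ : Fin (l + 1))
            = ⟨(i - (k + 1)) + 1, by omega⟩ := by ext; simp; omega
        rw [e, edge_compat' X (i - (k + 1)) (by omega) (by omega)])
  refine ⟨f, ⟨?_, ?_⟩, ?_⟩
  · apply ext_edges hSegal (k + 1) (by omega)
    intro i
    rw [Category.assoc, phi1_edge, hf]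
    dsimp only
    rw [dif_pos (show ((⟨i.1, by have := i.isLt; omega⟩ : Fin (k + 1 + (l + 1))) : ℕ) < k + 1
      from i.isLt)]
  · apply ext_edges hSegal (l + 1) (by omega)
    intro i
    rw [Category.assoc, phi2_edge, hf]
    dsimp only
    rw [dif_neg (show ¬ (((⟨(k + 1) + i.1, by have := i.isLt; omega⟩ :
      Fin (k + 1 + (l + 1))) : ℕ) < k + 1) by simp; omega)]
    have e : (⟨((⟨(k + 1) + i.1, by have := i.isLt; omega⟩ :
        Fin (k + 1 + (l + 1))) : ℕ) - (k + 1), by have := i.isLt; omega⟩ : Fin (l + 1)) = i := by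
      ext; simp
    rw [e]
  · rintro f' ⟨ha, hb⟩
    apply hfu
    intro i
    by_cases h : (i : ℕ) < k + 1
    · rw [dif_pos h]
      have e : X.map (phi1 (k + 1) (l + 1)).op ≫ edgeMap X ⟨i.1, h⟩ = edgeMap X i := by
        rw [phi1_edge]
      rw [← e, ← Category.assoc, ha]
    · rw [dif_neg h]
      have e : X.map (phi2 (k + 1) (l + 1)).op ≫ edgeMap X ⟨(i : ℕ) - (k + 1),
          by have := i.isLt; omega⟩ = edgeMap X i := by
        rw [phi2_edge]
        congr 1
        ext
        simp
        omega
      rw [← e, ← Category.assoc, hb]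

end SegalAux

/-- Let `X : Δᵒᵖ → C` be a simplicial object in a category `C` with finite
limits satisfying the (lower 1-)Segal condition: for all `n ≥ 2`, the canonical map
`X_n → X_{01} ×_{X_1} X_{12} ×_{X_2} ⋯ ×_{X_{n-1}} X_{n-1,n}` is an isomorphism (formulated
via its universal property: maps `T → X_n` correspond bijectively to compatible families of
edges `T → X_1`).  Then for every `0 ≤ k ≤ n` (here `n = k + l`), the square with vertices
`X_{[n]}`, `X_{{0,...,k}}`, `X_{{k,...,n}}`, `X_{{k}}`, with maps induced by the inclusions
of the subsets into `[n]` and of `{k}` into both intervals, is a pullback square in `C`. -/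
theorem stmt_15 {C : Type*} [Category C] [Limits.HasFiniteLimits C]
    (X : SimplicialObject C)
    (hSegal : ∀ (j : ℕ) (T : C) (g : Fin (j + 2) → (T ⟶ X _⦋1⦌)),
      (∀ i : Fin (j + 1), g i.castSucc ≫ vertexMap X 1 = g i.succ ≫ vertexMap X 0) →
      ∃! f : T ⟶ X _⦋j + 2⦌, ∀ i : Fin (j + 2), f ≫ edgeMap X i = g i) :
    ∀ k l : ℕ, IsPullback
      (X.map (SimplexCategory.mkHom
        ⟨Fin.castLE (by omega : k + 1 ≤ k + l + 1), fun _ _ h => h⟩).op)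
      (X.map (SimplexCategory.mkHom
        ⟨fun i : Fin (l + 1) => (⟨k + (i : ℕ), by have := i.isLt; omega⟩ : Fin (k + l + 1)),
          fun a b hab => Nat.add_le_add_left hab k⟩).op)
      (X.map (SimplexCategory.const (SimplexCategory.mk 0) (SimplexCategory.mk k)
        (Fin.last k)).op)
      (X.map (SimplexCategory.const (SimplexCategory.mk 0) (SimplexCategory.mk l) 0).op) := by
  intro k l
  show IsPullback (X.map (SegalAux.phi1 k l).op) (X.map (SegalAux.phi2 k l).op)
    (X.map (SimplexCategory.const (SimplexCategory.mk 0) (SimplexCategory.mk k)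
      (Fin.last k)).op)
    (X.map (SimplexCategory.const (SimplexCategory.mk 0) (SimplexCategory.mk l) 0).op)
  rcases k with _ | k
  · -- k = 0 : vertical maps are isomorphisms
    haveI : IsIso (SegalAux.phi2 0 l) := by
      apply SimplexCategory.isIso_of_bijective
      constructor
      · intro a b h
        have := congrArg Fin.val h
        simp only [SegalAux.phi2, SimplexCategory.mkHom, SimplexCategory.Hom.toOrderHom_mk,
          OrderHom.coe_mk] at this
        ext
        omega
      · intro c
        have hc := c.isLt
        simp only [SimplexCategory.len_mk] at hc
        refine ⟨⟨c.1, by simp only [SimplexCategory.len_mk]; omega⟩, ?_⟩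
        ext
        simp [SegalAux.phi2, SimplexCategory.mkHom]
    haveI : IsIso (X.map (SegalAux.phi2 0 l).op) := inferInstance
    have hc : SimplexCategory.const (SimplexCategory.mk 0) (SimplexCategory.mk 0)
        (Fin.last 0) = 𝟙 _ :=
      (SimplexCategory.eq_const_to_zero _).trans SimplexCategory.const_eq_id
    haveI : IsIso (X.map (SimplexCategory.const (SimplexCategory.mk 0) (SimplexCategory.mk 0)
        (Fin.last 0)).op) := by
      rw [hc, op_id, X.map_id]
      infer_instance
    exact IsPullback.of_vert_isIso ⟨SegalAux.sq_comm X 0 l⟩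
  · rcases l with _ | l
    · -- l = 0 : horizontal maps are isomorphisms
      have h1 : SegalAux.phi1 (k + 1) 0 = 𝟙 _ := by
        apply SimplexCategory.Hom.ext
        ext i
        rfl
      haveI : IsIso (X.map (SegalAux.phi1 (k + 1) 0).op) := by
        rw [h1, op_id, X.map_id]
        infer_instance
      haveI : IsIso (X.map (SimplexCategory.const (SimplexCategory.mk 0) (SimplexCategory.mk 0)
          0).op) := by
        rw [SimplexCategory.const_eq_id, op_id, X.map_id]
        infer_instance
      exact IsPullback.of_horiz_isIso ⟨SegalAux.sq_comm X (k + 1) 0⟩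
    · -- main case
      refine IsPullback.of_isLimit' ⟨SegalAux.sq_comm X (k + 1) (l + 1)⟩ ?_
      exact Limits.PullbackCone.IsLimit.mk _
        (fun s => (SegalAux.key hSegal k l s.pt s.fst s.snd s.condition).choose)
        (fun s => (SegalAux.key hSegal k l s.pt s.fst s.snd s.condition).choose_spec.1.1)
        (fun s => (SegalAux.key hSegal k l s.pt s.fst s.snd s.condition).choose_spec.1.2)
        (fun s m h1 h2 =>
          (SegalAux.key hSegal k l s.pt s.fst s.snd s.condition).choose_spec.2 m ⟨h1, h2⟩)
end
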